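/- Let α > 0, β > 0 be real numbers and n ∈ ℕ. Then the Turán type inequality [Γ(β+(n+2)α)]² / (Γ(β+(n+1)α) · Γ(β+(n+3)α)) · [E^{n+1}_{α,β}(z)]² ≤ E^n_{α,β}(z) · E^{n+2}_{α,β}(z) holds for all z > 0. -/
import Mathlib

open Real Filter Topology Finset

/-- Per-term inequality for the Euler product. -/
lemma gammaSeq_third (x h : ℝ) (hx : 0 < x) (hh : 0 < h) (n : ℕ) :
    Real.GammaSeq (x + h) n ^ 3 * Real.GammaSeq (x + 3 * h) n ≤
      Real.GammaSeq x n * Real.GammaSeq (x + 2 * h) n ^ 3 := by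
  rcases Nat.eq_zero_or_pos n with rfl | hn
  · simp only [Real.GammaSeq, Nat.cast_zero]
    rw [Real.zero_rpow (by positivity), Real.zero_rpow (by positivity),
      Real.zero_rpow (by positivity), Real.zero_rpow (by positivity)]
    norm_num
  have hN : (0:ℝ) < n := by exact_mod_cast hn
  set N : ℝ := (n : ℝ)
  have hP : ∀ s : ℝ, 0 < s → 0 < ∏ j ∈ Finset.range (n + 1), (s + j) := by
    intro s hs
    exact Finset.prod_pos fun j _ => by positivity
  -- product inequality
  have hprod : (∏ j ∈ Finset.range (n + 1), (x + j)) *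
      (∏ j ∈ Finset.range (n + 1), (x + 2 * h + j)) ^ 3 ≤
      (∏ j ∈ Finset.range (n + 1), (x + h + j)) ^ 3 *
        (∏ j ∈ Finset.range (n + 1), (x + 3 * h + j)) := by
    rw [← Finset.prod_pow, ← Finset.prod_pow, ← Finset.prod_mul_distrib,
      ← Finset.prod_mul_distrib]
    refine Finset.prod_le_prod (fun j _ => by positivity) fun j _ => ?_
    have hxj : (0:ℝ) < x + j := by positivity
    nlinarith [sq_nonneg h, sq_nonneg (x + (j:ℝ)), mul_pos hxj (pow_pos hh 3), pow_pos hh 4]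
  have hnum : ∀ a b : ℝ, (N ^ a) ^ (3:ℕ) * N ^ b = N ^ (3 * a + b) := by
    intro a b
    rw [← Real.rpow_natCast (N ^ a) 3, ← Real.rpow_mul hN.le, ← Real.rpow_add hN]
    ring_nf
  simp only [Real.GammaSeq]
  rw [div_pow, div_pow, div_mul_div_comm, div_mul_div_comm]
  have h1 : (N ^ (x + h)) ^ (3:ℕ) * N ^ (x + 3 * h)
      = (N ^ (x + 2 * h)) ^ (3:ℕ) * N ^ x := by
    rw [hnum, hnum]; ring_nf
  have hC : (N ^ (x + h) * (n.factorial : ℝ)) ^ 3 * (N ^ (x + 3 * h) * n.factorial)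
      = N ^ x * (n.factorial : ℝ) * (N ^ (x + 2 * h) * n.factorial) ^ 3 := by
    rw [mul_pow, mul_pow]
    linear_combination ((n.factorial : ℝ)) ^ 4 * h1
  rw [hC]
  exact div_le_div_of_nonneg_left (by positivity)
    (by positivity) hprod

lemma gamma_third (x h : ℝ) (hx : 0 < x) (hh : 0 < h) :
    Real.Gamma (x + h) ^ 3 * Real.Gamma (x + 3 * h) ≤
      Real.Gamma x * Real.Gamma (x + 2 * h) ^ 3 := by
  have hL : Filter.Tendsto (fun n => Real.GammaSeq (x + h) n ^ 3 * Real.GammaSeq (x + 3 * h) n)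
      atTop (nhds (Real.Gamma (x + h) ^ 3 * Real.Gamma (x + 3 * h))) :=
    ((Real.GammaSeq_tendsto_Gamma (x + h)).pow 3).mul (Real.GammaSeq_tendsto_Gamma (x + 3 * h))
  have hR : Filter.Tendsto (fun n => Real.GammaSeq x n * Real.GammaSeq (x + 2 * h) n ^ 3)
      atTop (nhds (Real.Gamma x * Real.Gamma (x + 2 * h) ^ 3)) :=
    (Real.GammaSeq_tendsto_Gamma x).mul ((Real.GammaSeq_tendsto_Gamma (x + 2 * h)).pow 3)
  exact le_of_tendsto_of_tendsto' hL hR (gammaSeq_third x h hx hh)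

/-- ratio lower bound from log-convexity -/
lemma gamma_ratio (t a : ℝ) (ht : 1 < t) (ha : 0 < a) :
    Real.Gamma t * Real.exp (a * Real.log (t - 1)) ≤ Real.Gamma (t + a) := by
  have ht0 : (0:ℝ) < t := by linarith
  have ht1 : (0:ℝ) < t - 1 := by linarith
  have hslope := Real.convexOn_log_Gamma.slope_mono_adjacent
    (x := t - 1) (y := t) (z := t + a)
    (Set.mem_Ioi.2 ht1) (Set.mem_Ioi.2 (by linarith)) (by linarith) (by linarith)
  simp only [Function.comp] at hslope
  have hstep : Real.log (Real.Gamma t) - Real.log (Real.Gamma (t - 1)) = Real.log (t - 1) := by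
    have := Real.Gamma_add_one (ne_of_gt ht1)
    rw [show t - 1 + 1 = t by ring] at this
    rw [this, Real.log_mul (ne_of_gt ht1) (ne_of_gt (Real.Gamma_pos_of_pos ht1))]
    ring
  have h2 : a * Real.log (t - 1) + Real.log (Real.Gamma t) ≤ Real.log (Real.Gamma (t + a)) := by
    have hd : (t - (t - 1)) = 1 := by ring
    have hd2 : (t + a - t) = a := by ring
    rw [hd, hd2, div_one] at hslope
    rw [hstep] at hslope
    have hm := (le_div_iff₀ ha).mp hslope
    linarith
  calc Real.Gamma t * Real.exp (a * Real.log (t - 1))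
      = Real.exp (a * Real.log (t - 1) + Real.log (Real.Gamma t)) := by
        rw [Real.exp_add, Real.exp_log (Real.Gamma_pos_of_pos ht0)]; ring
    _ ≤ Real.exp (Real.log (Real.Gamma (t + a))) := Real.exp_le_exp.mpr h2
    _ = Real.Gamma (t + a) := Real.exp_log (Real.Gamma_pos_of_pos (by linarith))

lemma lattice (α β : ℝ) (hα : 0 < α) (hβ : 0 < β) : ∀ k : ℕ,
    Real.Gamma (β + α * 2) ^ 2 *
      (Real.Gamma (β + α * (1 + (k:ℝ))) * Real.Gamma (β + α * (3 + (k:ℝ)))) ≤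
    Real.Gamma (β + α) * Real.Gamma (β + α * 3) *
      Real.Gamma (β + α * (2 + (k:ℝ))) ^ 2 := by
  intro k
  induction k with
  | zero =>
    norm_num
    exact le_of_eq (by ring)
  | succ k ih =>
    have key := gamma_third (β + α * (1 + (k:ℝ))) α (by positivity) hα
    have e1 : β + α * (1 + (k:ℝ)) + α = β + α * (2 + (k:ℝ)) := by ring
    have e2 : β + α * (1 + (k:ℝ)) + 3 * α = β + α * (3 + ((k:ℝ) + 1)) := by ring
    have e3 : β + α * (1 + (k:ℝ)) + 2 * α = β + α * (3 + (k:ℝ)) := by ring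
    have e4 : β + α * (1 + ((k:ℝ) + 1)) = β + α * (2 + (k:ℝ)) := by ring
    have e5 : β + α * (2 + ((k:ℝ) + 1)) = β + α * (3 + (k:ℝ)) := by ring
    rw [e1, e2, e3] at key
    push_cast
    rw [e4, e5]
    set G1 := Real.Gamma (β + α) with hG1
    set G2 := Real.Gamma (β + α * 2) with hG2
    set G3 := Real.Gamma (β + α * 3) with hG3
    set Ga := Real.Gamma (β + α * (1 + (k:ℝ))) with hGa
    set Gb := Real.Gamma (β + α * (2 + (k:ℝ))) with hGb
    set Gc := Real.Gamma (β + α * (3 + (k:ℝ))) with hGc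
    set Gd := Real.Gamma (β + α * (3 + ((k:ℝ) + 1))) with hGd
    have pG1 : 0 < G1 := Real.Gamma_pos_of_pos (by positivity)
    have pG2 : 0 < G2 := Real.Gamma_pos_of_pos (by positivity)
    have pG3 : 0 < G3 := Real.Gamma_pos_of_pos (by positivity)
    have pGa : 0 < Ga := Real.Gamma_pos_of_pos (by positivity)
    have pGb : 0 < Gb := Real.Gamma_pos_of_pos (by positivity)
    have pGc : 0 < Gc := Real.Gamma_pos_of_pos (by positivity)
    have pGd : 0 < Gd := Real.Gamma_pos_of_pos (by positivity)
    -- goal : G2^2 * (Gb * Gd) ≤ G1 * G3 * Gc^2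
    have hchain : (G2 ^ 2 * (Gb * Gd)) * Gb ^ 2 ≤ (G1 * G3 * Gc ^ 2) * Gb ^ 2 := by
      calc (G2 ^ 2 * (Gb * Gd)) * Gb ^ 2 = G2 ^ 2 * (Gb ^ 3 * Gd) := by ring
        _ ≤ G2 ^ 2 * (Ga * Gc ^ 3) := by
            exact mul_le_mul_of_nonneg_left key (by positivity)
        _ = (G2 ^ 2 * (Ga * Gc)) * Gc ^ 2 := by ring
        _ ≤ (G1 * G3 * Gb ^ 2) * Gc ^ 2 := mul_le_mul_of_nonneg_right ih (by positivity)
        _ = (G1 * G3 * Gc ^ 2) * Gb ^ 2 := by ring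
    exact le_of_mul_le_mul_right hchain (by positivity)

lemma summable_ml (α β z : ℝ) (hα : 0 < α) (hβ : 0 < β) (hz : 0 < z) :
    Summable (fun k : ℕ => z ^ k / Real.Gamma (α * k + β)) := by
  apply summable_of_ratio_norm_eventually_le (r := 1/2) (by norm_num)
  have ht : Tendsto (fun k : ℕ => α * k + β) atTop atTop :=
    tendsto_atTop_add_const_right _ β
      ((tendsto_natCast_atTop_atTop).const_mul_atTop hα)
  have h2 : ∀ᶠ k : ℕ in atTop, 2 ≤ α * k + β := ht.eventually_ge_atTop 2
  have hlog : Tendsto (fun k : ℕ => α * Real.log (α * k + β - 1)) atTop atTop := by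
    apply Tendsto.const_mul_atTop hα
    exact Real.tendsto_log_atTop.comp (tendsto_atTop_add_const_right _ (-1) ht)
  have h3 : ∀ᶠ k : ℕ in atTop, Real.log (2 * z) ≤ α * Real.log (α * k + β - 1) :=
    hlog.eventually_ge_atTop _
  filter_upwards [h2, h3] with k hk2 hk3
  set t := α * (k:ℝ) + β with htdef
  have ht1 : (1:ℝ) < t := by linarith
  have hGt : 0 < Real.Gamma t := Real.Gamma_pos_of_pos (by linarith)
  have hGta : 0 < Real.Gamma (t + α) := Real.Gamma_pos_of_pos (by linarith)
  have hr := gamma_ratio t α ht1 hα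
  have hexp : 2 * z ≤ Real.exp (α * Real.log (t - 1)) := by
    calc 2 * z = Real.exp (Real.log (2 * z)) := (Real.exp_log (by positivity)).symm
      _ ≤ _ := Real.exp_le_exp.mpr hk3
  have hkey : 2 * z * Real.Gamma t ≤ Real.Gamma (t + α) := by nlinarith
  have hcast : α * ((k:ℕ) + 1 : ℕ) + β = t + α := by push_cast; ring
  rw [Real.norm_eq_abs, Real.norm_eq_abs, abs_of_pos (by positivity),
    abs_of_pos (by positivity), hcast]
  rw [div_le_iff₀ hGta, pow_succ]
  have heq : 1 / 2 * (z ^ k / Real.Gamma t) * Real.Gamma (t + α)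
      = z ^ k * (Real.Gamma (t + α) / (2 * Real.Gamma t)) := by
    field_simp
  rw [heq]
  refine mul_le_mul_of_nonneg_left ?_ (by positivity)
  rw [le_div_iff₀ (by positivity)]
  linarith

/-- The Mittag-Leffler function `E_{α,β}(z) = ∑_{n=0}^∞ z^n / Γ(α n + β)`. -/
noncomputable def mittagLeffler (α β z : ℝ) : ℝ :=
  ∑' n : ℕ, z ^ n / Real.Gamma (α * n + β)

/-- The `n`-th remainder of the Mittag-Leffler series:
`E^n_{α,β}(z) = ∑_{k=n+1}^∞ z^k / Γ(α k + β)`. -/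
noncomputable def mittagLefflerRem (α β : ℝ) (n : ℕ) (z : ℝ) : ℝ :=
  ∑' k : ℕ, z ^ (n + 1 + k) / Real.Gamma (α * (n + 1 + k) + β)

/-- Sharp Turán type inequality for remainders of the Mittag-Leffler series. -/
theorem mittagLefflerRem_turan_sharp (α β : ℝ) (hα : 0 < α) (hβ : 0 < β) (n : ℕ) :
    ∀ z : ℝ, 0 < z →
      (Real.Gamma (β + (n + 2) * α)) ^ 2 /
          (Real.Gamma (β + (n + 1) * α) * Real.Gamma (β + (n + 3) * α)) *
          (mittagLefflerRem α β (n + 1) z) ^ 2 ≤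
        mittagLefflerRem α β n z * mittagLefflerRem α β (n + 2) z := by
  intro z hz
  set G : ℕ → ℝ := fun m => Real.Gamma (α * m + β) with hGdef
  have hGpos : ∀ m : ℕ, 0 < G m := fun m => Real.Gamma_pos_of_pos (by positivity)
  set u : ℕ → ℝ := fun k => z ^ (n + 1 + k) / G (n + 1 + k) with hudef
  set t : ℕ → ℝ := fun k => z ^ (n + 2 + k) / G (n + 2 + k) with htdef
  set v : ℕ → ℝ := fun k => z ^ (n + 3 + k) / G (n + 3 + k) with hvdef
  have hu0 : ∀ k, 0 < u k := fun k => div_pos (by positivity) (hGpos _)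
  have ht0 : ∀ k, 0 < t k := fun k => div_pos (by positivity) (hGpos _)
  have hv0 : ∀ k, 0 < v k := fun k => div_pos (by positivity) (hGpos _)
  have hsum := summable_ml α β z hα hβ hz
  have hu : Summable u := hsum.comp_injective (add_right_injective (n + 1))
  have ht : Summable t := hsum.comp_injective (add_right_injective (n + 2))
  have hv : Summable v := hsum.comp_injective (add_right_injective (n + 3))
  have hremU : mittagLefflerRem α β n z = ∑' k, u k := by
    simp only [hudef, hGdef, mittagLefflerRem]
    refine tsum_congr fun k => ?_
    congr 2
    push_cast; ring
  have hremT : mittagLefflerRem α β (n + 1) z = ∑' k, t k := by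
    simp only [htdef, hGdef, mittagLefflerRem]
    refine tsum_congr fun k => ?_
    rw [show n + 1 + 1 + k = n + 2 + k from by omega]
    congr 2
    push_cast; ring
  have hremV : mittagLefflerRem α β (n + 2) z = ∑' k, v k := by
    simp only [hvdef, hGdef, mittagLefflerRem]
    refine tsum_congr fun k => ?_
    rw [show n + 2 + 1 + k = n + 3 + k from by omega]
    congr 2
    push_cast; ring
  -- rewrite the Gamma constants
  have hg1 : Real.Gamma (β + (n + 1) * α) = G (n + 1) := by
    rw [hGdef]; congr 1; push_cast; ring
  have hg2 : Real.Gamma (β + (n + 2) * α) = G (n + 2) := by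
    rw [hGdef]; congr 1; push_cast; ring
  have hg3 : Real.Gamma (β + (n + 3) * α) = G (n + 3) := by
    rw [hGdef]; congr 1; push_cast; ring
  rw [hremU, hremT, hremV, hg1, hg2, hg3]
  set c : ℝ := G (n + 2) ^ 2 / (G (n + 1) * G (n + 3)) with hcdef
  have hc : 0 < c := div_pos (by positivity) (by positivity)
  -- lattice inequality in `G` form
  have L : ∀ k : ℕ, G (n + 2) ^ 2 * (G (n + 1 + k) * G (n + 3 + k)) ≤
      G (n + 1) * G (n + 3) * G (n + 2 + k) ^ 2 := by
    intro k
    have hb : 0 < α * (n:ℝ) + β := by positivity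
    have := lattice α (α * n + β) hα hb k
    simp only [hGdef]
    rw [show α * ((n + 2 : ℕ):ℝ) + β = α * (n:ℝ) + β + α * 2 from by push_cast; ring,
      show α * ((n + 1 : ℕ):ℝ) + β = α * (n:ℝ) + β + α from by push_cast; ring,
      show α * ((n + 3 : ℕ):ℝ) + β = α * (n:ℝ) + β + α * 3 from by push_cast; ring,
      show α * ((n + 1 + k : ℕ):ℝ) + β = α * (n:ℝ) + β + α * (1 + (k:ℝ)) from by push_cast; ring,
      show α * ((n + 2 + k : ℕ):ℝ) + β = α * (n:ℝ) + β + α * (2 + (k:ℝ)) from by push_cast; ring,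
      show α * ((n + 3 + k : ℕ):ℝ) + β = α * (n:ℝ) + β + α * (3 + (k:ℝ)) from by push_cast; ring]
    exact this
  -- key per-term inequality
  have key : ∀ k, c * t k ^ 2 ≤ u k * v k := by
    intro k
    rw [hudef, htdef, hvdef, hcdef]
    simp only
    rw [div_pow, div_mul_div_comm, div_mul_div_comm, div_le_div_iff₀ (by positivity) (by positivity)]
    have hz2 : (z ^ (n + 2 + k)) ^ 2 = z ^ (n + 1 + k) * z ^ (n + 3 + k) := by
      rw [← pow_mul, ← pow_add]; congr 1; omega
    rw [hz2]
    have := mul_le_mul_of_nonneg_left (L k)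
      (show (0:ℝ) ≤ z ^ (n + 1 + k) * z ^ (n + 3 + k) by positivity)
    nlinarith [this]
  -- Cauchy–Schwarz
  have step2 : ∀ k, Real.sqrt c * t k ≤ Real.sqrt (u k * v k) := by
    intro k
    have h1 : Real.sqrt (c * t k ^ 2) = Real.sqrt c * t k := by
      rw [Real.sqrt_mul hc.le, Real.sqrt_sq (ht0 k).le]
    rw [← h1]
    exact Real.sqrt_le_sqrt (key k)
  have hsum_uv : Summable (fun k => Real.sqrt (u k * v k)) := by
    refine Summable.of_nonneg_of_le (fun k => Real.sqrt_nonneg _) (fun k => ?_)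
      ((hu.add hv).div_const 2)
    rw [Real.sqrt_mul (hu0 k).le]
    nlinarith [Real.sq_sqrt (hu0 k).le, Real.sq_sqrt (hv0 k).le,
      Real.sqrt_nonneg (u k), Real.sqrt_nonneg (v k),
      sq_nonneg (Real.sqrt (u k) - Real.sqrt (v k))]
  have hU0 : (0:ℝ) ≤ ∑' k, u k := tsum_nonneg fun k => (hu0 k).le
  have hV0 : (0:ℝ) ≤ ∑' k, v k := tsum_nonneg fun k => (hv0 k).le
  have hS0 : (0:ℝ) ≤ ∑' k, t k := tsum_nonneg fun k => (ht0 k).le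
  have step3 : ∑' k, Real.sqrt (u k * v k) ≤
      Real.sqrt (∑' k, u k) * Real.sqrt (∑' k, v k) := by
    refine Summable.tsum_le_of_sum_le hsum_uv fun s => ?_
    calc ∑ k ∈ s, Real.sqrt (u k * v k)
        = ∑ k ∈ s, Real.sqrt (u k) * Real.sqrt (v k) :=
          Finset.sum_congr rfl fun k _ => Real.sqrt_mul (hu0 k).le _
      _ ≤ Real.sqrt (∑ k ∈ s, u k) * Real.sqrt (∑ k ∈ s, v k) :=
          Real.sum_sqrt_mul_sqrt_le s (fun i => (hu0 i).le) (fun i => (hv0 i).le)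
      _ ≤ Real.sqrt (∑' k, u k) * Real.sqrt (∑' k, v k) := by
          apply mul_le_mul
          · exact Real.sqrt_le_sqrt (Summable.sum_le_tsum s (fun i _ => (hu0 i).le) hu)
          · exact Real.sqrt_le_sqrt (Summable.sum_le_tsum s (fun i _ => (hv0 i).le) hv)
          · exact Real.sqrt_nonneg _
          · exact Real.sqrt_nonneg _
  have step4 : Real.sqrt c * ∑' k, t k ≤
      Real.sqrt (∑' k, u k) * Real.sqrt (∑' k, v k) := by
    calc Real.sqrt c * ∑' k, t k = ∑' k, Real.sqrt c * t k := tsum_mul_left.symm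
      _ ≤ ∑' k, Real.sqrt (u k * v k) :=
          Summable.tsum_le_tsum step2 (ht.mul_left _) hsum_uv
      _ ≤ _ := step3
  calc c * (∑' k, t k) ^ 2 = (Real.sqrt c * ∑' k, t k) ^ 2 := by
        rw [mul_pow, Real.sq_sqrt hc.le]
    _ ≤ (Real.sqrt (∑' k, u k) * Real.sqrt (∑' k, v k)) ^ 2 := by
        apply pow_le_pow_left₀ (by positivity) step4
    _ = (∑' k, u k) * ∑' k, v k := by
        rw [mul_pow, Real.sq_sqrt hU0, Real.sq_sqrt hV0]
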